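/- Let d ≥ 1, σ > 0, and μ₁, μ₂ ∈ ℝ^d, and set α = ‖μ₁ − μ₂‖₂. Let p₁ and p₂ be the densities of the isotropic Gaussian distributions N(μ₁, σ²I_d) and N(μ₂, σ²I_d) on ℝ^d, i.e., pⱼ(x) = Π_{i=1}^d g(x_i; μ_{j,i}, σ²) where g(·; m, σ²) is the one-dimensional Gaussian density with mean m and variance σ². Then the total variation distance satisfies (1/2)·∫_{ℝ^d} |p₁(x) − p₂(x)| dx = ∫_{−α/(2σ)}^{α/(2σ)} g(x; 0, 1) dx. -/

import Mathlib

open MeasureTheory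

/-- The one-dimensional Gaussian density with mean `m` and variance `s²`. -/
noncomputable def gaussPdf (m s : ℝ) (x : ℝ) : ℝ :=
  (Real.sqrt (2 * Real.pi * s ^ 2))⁻¹ * Real.exp (-(x - m) ^ 2 / (2 * s ^ 2))

lemma gaussPdf_eq (m σ : ℝ) :
    gaussPdf m σ = ProbabilityTheory.gaussianPDFReal m ⟨σ ^ 2, sq_nonneg σ⟩ := rfl

lemma integrable_gaussPdf (m σ : ℝ) : Integrable (gaussPdf m σ) := by
  rw [gaussPdf_eq]; exact ProbabilityTheory.integrable_gaussianPDFReal _ _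

lemma gaussPdf_nonneg (m σ : ℝ) (x : ℝ) : 0 ≤ gaussPdf m σ x := by
  rw [gaussPdf_eq]; exact ProbabilityTheory.gaussianPDFReal_nonneg m _ x

lemma integral_gaussPdf (m : ℝ) {σ : ℝ} (hσ : σ ≠ 0) : ∫ x, gaussPdf m σ x = 1 := by
  rw [gaussPdf_eq]
  refine ProbabilityTheory.integral_gaussianPDFReal_eq_one m ?_
  intro h
  exact hσ ((pow_eq_zero_iff two_ne_zero).mp (congrArg NNReal.toReal h : σ ^ 2 = 0))

lemma prod_gaussPdf (d : ℕ) (σ : ℝ) (μ x : Fin d → ℝ) :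
    ∏ i, gaussPdf (μ i) σ (x i)
      = (Real.sqrt (2 * Real.pi * σ ^ 2))⁻¹ ^ d
          * Real.exp (-(∑ i, (x i - μ i) ^ 2) / (2 * σ ^ 2)) := by
  simp only [gaussPdf]
  rw [Finset.prod_mul_distrib, Finset.prod_const, Finset.card_univ, Fintype.card_fin,
    ← Real.exp_sum]
  congr 1
  rw [← Finset.sum_div, ← Finset.sum_neg_distrib]

lemma euclid_norm_sq {d : ℕ} (y m : EuclideanSpace ℝ (Fin d)) :
    ‖y - m‖ ^ 2 = ∑ i, (y i - m i) ^ 2 := by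
  rw [EuclideanSpace.norm_eq, Real.sq_sqrt (Finset.sum_nonneg fun i _ => sq_nonneg _)]
  simp [sq_abs]

lemma oneDim {σ : ℝ} (hσ : 0 < σ) {a : ℝ} (ha : 0 ≤ a) :
    ∫ x, |gaussPdf (a / 2) σ x - gaussPdf (-(a / 2)) σ x| =
      2 * ∫ x in (-(a / (2 * σ)))..(a / (2 * σ)), gaussPdf 0 1 x := by
  set f₁ := gaussPdf (a / 2) σ with hf₁
  set f₂ := gaussPdf (-(a / 2)) σ with hf₂
  have h1 : Integrable f₁ := integrable_gaussPdf _ _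
  have h2 : Integrable f₂ := integrable_gaussPdf _ _
  have hneg : ∀ x, f₁ (-x) = f₂ x := by
    intro x; simp only [hf₁, hf₂, gaussPdf]; ring_nf
  have hshift : ∀ x, f₂ x = f₁ (x + a) := by
    intro x; simp only [hf₁, hf₂, gaussPdf]; ring_nf
  have hle : ∀ x ∈ Set.Ioi (0:ℝ), |f₁ x - f₂ x| = f₁ x - f₂ x := by
    intro x hx
    rw [abs_of_nonneg]
    rw [sub_nonneg, hf₁, hf₂, gaussPdf, gaussPdf]
    refine mul_le_mul_of_nonneg_left ?_ (inv_nonneg.2 (Real.sqrt_nonneg _))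
    rw [Real.exp_le_exp]
    rw [div_le_div_iff_of_pos_right (by positivity)]
    have hx' : (0:ℝ) < x := hx
    nlinarith
  have step1 : ∫ x, |f₁ x - f₂ x| = 2 * ∫ x in Set.Ioi (0:ℝ), (f₁ x - f₂ x) := by
    calc ∫ x, |f₁ x - f₂ x| = ∫ x, (fun y => |f₁ y - f₂ y|) |x| := by
          congr 1; funext x
          rcases abs_choice x with h | h
          · rw [h]
          · rw [h]; simp only
            rw [show f₁ (-x) = f₂ x from hneg x,
              show f₂ (-x) = f₁ x from by rw [← hneg (-x), neg_neg], abs_sub_comm]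
      _ = 2 * ∫ x in Set.Ioi (0:ℝ), |f₁ x - f₂ x| :=
          integral_comp_abs (f := fun y => |f₁ y - f₂ y|)
      _ = 2 * ∫ x in Set.Ioi (0:ℝ), (f₁ x - f₂ x) := by
          rw [setIntegral_congr_fun measurableSet_Ioi fun x hx => hle x hx]
  have hpre : (· + a) ⁻¹' Set.Ioi a = Set.Ioi (0:ℝ) := by
    ext x; simp
  have step2 : ∫ x in Set.Ioi (0:ℝ), f₂ x = ∫ x in Set.Ioi a, f₁ x := by
    have := (measurePreserving_add_right volume a).setIntegral_preimage_emb
      (measurableEmbedding_addRight a) f₁ (Set.Ioi a)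
    rw [hpre] at this
    rw [← this]
    exact setIntegral_congr_fun measurableSet_Ioi fun x _ => hshift x
  have split : ∫ x in Set.Ioi (0:ℝ), f₁ x
      = (∫ x in Set.Ioc 0 a, f₁ x) + ∫ x in Set.Ioi a, f₁ x := by
    rw [← Set.Ioc_union_Ioi_eq_Ioi ha,
      setIntegral_union (Set.Ioc_disjoint_Ioi le_rfl) measurableSet_Ioi
        h1.integrableOn h1.integrableOn]
  have step3 : ∫ x in Set.Ioi (0:ℝ), (f₁ x - f₂ x) = ∫ x in (0:ℝ)..a, f₁ x := by
    rw [integral_sub h1.integrableOn h2.integrableOn, step2, split,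
      intervalIntegral.integral_of_le ha]
    ring
  have key : ∫ x in (0:ℝ)..a, f₁ x
      = ∫ x in (-(a / (2 * σ)))..(a / (2 * σ)), gaussPdf 0 1 x := by
    have hf : ∀ x, f₁ x = σ⁻¹ • gaussPdf 0 1 ((x - a / 2) / σ) := by
      intro x
      have hsq : Real.sqrt (2 * Real.pi * σ ^ 2) = Real.sqrt (2 * Real.pi * 1 ^ 2) * σ := by
        rw [show (2 * Real.pi * σ ^ 2 : ℝ) = (2 * Real.pi * 1 ^ 2) * σ ^ 2 by ring,
          Real.sqrt_mul (by positivity), Real.sqrt_sq hσ.le]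
      have hexp : -((x - a / 2) / σ - 0) ^ 2 / (2 * 1 ^ 2) = -(x - a / 2) ^ 2 / (2 * σ ^ 2) := by
        rw [sub_zero, div_pow]
        field_simp
      simp only [hf₁, gaussPdf, smul_eq_mul, hexp, hsq]
      rw [mul_inv]
      ring
    simp_rw [hf]
    rw [intervalIntegral.integral_smul,
      show (fun x => gaussPdf 0 1 ((x - a / 2) / σ))
        = fun x => (fun t => gaussPdf 0 1 (t / σ)) (x - a / 2) from rfl,
      intervalIntegral.integral_comp_sub_right (fun t => gaussPdf 0 1 (t / σ)) (a / 2),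
      intervalIntegral.integral_comp_div _ hσ.ne',
      smul_smul, inv_mul_cancel₀ hσ.ne', one_smul]
    congr 1 <;> ring
  rw [step1, step3, key]

lemma factor_fubini {d : ℕ} (hd : 1 ≤ d) {σ : ℝ} (hσ0 : σ ≠ 0) (a : ℝ)
    (n₁ n₂ : Fin d → ℝ)
    (hn₁ : n₁ = fun i => if i = (⟨0, hd⟩ : Fin d) then a / 2 else 0)
    (hn₂ : n₂ = fun i => if i = (⟨0, hd⟩ : Fin d) then -(a / 2) else 0) :
    ∫ x : Fin d → ℝ,
        |(∏ i, gaussPdf (n₁ i) σ (x i)) - ∏ i, gaussPdf (n₂ i) σ (x i)|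
      = ∫ t, |gaussPdf (a / 2) σ t - gaussPdf (-(a / 2)) σ t| := by
  classical
  set i0 : Fin d := ⟨0, hd⟩
  set F : Fin d → ℝ → ℝ := fun i t =>
    if i = i0 then |gaussPdf (a / 2) σ t - gaussPdf (-(a / 2)) σ t|
    else gaussPdf 0 σ t with hF
  have hFi0 : ∀ t, F i0 t = |gaussPdf (a / 2) σ t - gaussPdf (-(a / 2)) σ t| := by
    intro t; simp [hF]
  have hFne : ∀ i, i ≠ i0 → ∀ t, F i t = gaussPdf 0 σ t := by
    intro i hi t; simp [hF, hi]
  have key : ∀ x : Fin d → ℝ,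
      |(∏ i, gaussPdf (n₁ i) σ (x i)) - ∏ i, gaussPdf (n₂ i) σ (x i)|
        = ∏ i, F i (x i) := by
    intro x
    have h₁ : ∏ i, gaussPdf (n₁ i) σ (x i)
        = gaussPdf (a / 2) σ (x i0) * ∏ i ∈ Finset.univ.erase i0, gaussPdf 0 σ (x i) := by
      rw [← Finset.mul_prod_erase Finset.univ _ (Finset.mem_univ i0)]
      congr 1
      · rw [hn₁]; simp
      · refine Finset.prod_congr rfl fun i hi => ?_
        rw [hn₁]; simp [Finset.ne_of_mem_erase hi]
    have h₂ : ∏ i, gaussPdf (n₂ i) σ (x i)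
        = gaussPdf (-(a / 2)) σ (x i0) * ∏ i ∈ Finset.univ.erase i0, gaussPdf 0 σ (x i) := by
      rw [← Finset.mul_prod_erase Finset.univ _ (Finset.mem_univ i0)]
      congr 1
      · rw [hn₂]; simp
      · refine Finset.prod_congr rfl fun i hi => ?_
        rw [hn₂]; simp [Finset.ne_of_mem_erase hi]
    have h₃ : ∏ i, F i (x i)
        = |gaussPdf (a / 2) σ (x i0) - gaussPdf (-(a / 2)) σ (x i0)|
            * ∏ i ∈ Finset.univ.erase i0, gaussPdf 0 σ (x i) := by
      rw [← Finset.mul_prod_erase Finset.univ _ (Finset.mem_univ i0), hFi0]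
      congr 1
      exact Finset.prod_congr rfl fun i hi => hFne i (Finset.ne_of_mem_erase hi) _
    rw [h₁, h₂, h₃, ← sub_mul, abs_mul,
      abs_of_nonneg (Finset.prod_nonneg fun i _ => gaussPdf_nonneg 0 σ (x i))]
  calc ∫ x : Fin d → ℝ, |(∏ i, gaussPdf (n₁ i) σ (x i)) - ∏ i, gaussPdf (n₂ i) σ (x i)|
      = ∫ x : Fin d → ℝ, ∏ i, F i (x i) := by simp only [key]
    _ = ∏ i, ∫ t, F i t := integral_fintype_prod_volume_eq_prod F
    _ = ∫ t, |gaussPdf (a / 2) σ t - gaussPdf (-(a / 2)) σ t| := by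
        rw [← Finset.mul_prod_erase Finset.univ _ (Finset.mem_univ i0)]
        rw [show (∫ t, F i0 t) = ∫ t, |gaussPdf (a / 2) σ t - gaussPdf (-(a / 2)) σ t| by
          simp only [hFi0]]
        rw [Finset.prod_eq_one fun i hi => ?_, mul_one]
        rw [show (∫ t, F i t) = ∫ t, gaussPdf 0 σ t by
          simp only [hFne i (Finset.ne_of_mem_erase hi)]]
        exact integral_gaussPdf 0 hσ0

/-- The total variation distance between `N(μ₁, σ² I_d)` and `N(μ₂, σ² I_d)`, i.e., half
the `L¹` distance of their densities, equals `∫_{-α/(2σ)}^{α/(2σ)} g(x; 0, 1) dx` where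
`α = ‖μ₁ - μ₂‖₂`. -/
theorem gaussian_tv_eq (d : ℕ) (hd : 1 ≤ d) (σ : ℝ) (hσ : 0 < σ) (μ₁ μ₂ : Fin d → ℝ) :
    (1 / 2) * ∫ x : Fin d → ℝ,
        |(∏ i, gaussPdf (μ₁ i) σ (x i)) - ∏ i, gaussPdf (μ₂ i) σ (x i)| =
      ∫ x in (-(Real.sqrt (∑ i, (μ₁ i - μ₂ i) ^ 2) / (2 * σ)))..
          (Real.sqrt (∑ i, (μ₁ i - μ₂ i) ^ 2) / (2 * σ)), gaussPdf 0 1 x := by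
  classical
  by_cases h0 : μ₁ = μ₂
  · subst h0
    simp
  · set α := Real.sqrt (∑ i, (μ₁ i - μ₂ i) ^ 2) with hαdef
    set i0 : Fin d := ⟨0, hd⟩
    set n₁ : Fin d → ℝ := fun i => if i = i0 then α / 2 else 0 with hn₁
    set n₂ : Fin d → ℝ := fun i => if i = i0 then -(α / 2) else 0 with hn₂
    have hsum : 0 < ∑ i, (μ₁ i - μ₂ i) ^ 2 := by
      obtain ⟨i, hi⟩ := Function.ne_iff.mp h0
      exact Finset.sum_pos' (fun j _ => sq_nonneg _)
        ⟨i, Finset.mem_univ i, lt_of_le_of_ne (sq_nonneg _)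
          (Ne.symm (pow_ne_zero 2 (sub_ne_zero.2 hi)))⟩
    have hαpos : 0 < α := Real.sqrt_pos.2 hsum
    set m₁ : EuclideanSpace ℝ (Fin d) := (WithLp.equiv 2 (Fin d → ℝ)).symm μ₁ with hm₁
    set m₂ : EuclideanSpace ℝ (Fin d) := (WithLp.equiv 2 (Fin d → ℝ)).symm μ₂ with hm₂
    set u : EuclideanSpace ℝ (Fin d) := m₁ - m₂ with hu
    set v : EuclideanSpace ℝ (Fin d) := EuclideanSpace.single i0 α with hv
    have hui : ∀ i, u i = μ₁ i - μ₂ i := fun i => rfl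
    have hunorm : ‖u‖ = α := by
      rw [EuclideanSpace.norm_eq]
      congr 1
      refine Finset.sum_congr rfl fun i _ => ?_
      rw [hui, Real.norm_eq_abs, sq_abs]
    have hvnorm : ‖v‖ = α := by
      rw [hv, EuclideanSpace.norm_single]; exact Real.norm_of_nonneg hαpos.le
    set R := Submodule.reflection (ℝ ∙ (v - u))ᗮ with hR
    have hRvu : R v = u := Submodule.reflection_sub (hvnorm.trans hunorm.symm)
    set ν₁ : EuclideanSpace ℝ (Fin d) := (2⁻¹ : ℝ) • v with hν₁
    set ν₂ : EuclideanSpace ℝ (Fin d) := -((2⁻¹ : ℝ) • v) with hν₂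
    have hνsub : ν₁ - v = ν₂ := by rw [hν₁, hν₂]; module
    set w : EuclideanSpace ℝ (Fin d) := m₁ - R ν₁ with hw
    set T : EuclideanSpace ℝ (Fin d) → EuclideanSpace ℝ (Fin d) := fun z => R z + w with hT
    have hTmp : MeasurePreserving T :=
      (measurePreserving_add_right volume w).comp R.measurePreserving
    have hTemb : MeasurableEmbedding T :=
      (measurableEmbedding_addRight w).comp R.toHomeomorph.measurableEmbedding
    have hT1 : ∀ z, ‖T z - m₁‖ = ‖z - ν₁‖ := by
      intro z
      have : T z - m₁ = R z - R ν₁ := by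
        rw [hT, hw]
        exact (by intro a b c; abel : ∀ a b c : EuclideanSpace ℝ (Fin d), a + (b - c) - b = a - c) _ _ _
      rw [this, ← map_sub, R.norm_map]
    have hT2 : ∀ z, ‖T z - m₂‖ = ‖z - ν₂‖ := by
      intro z
      have h2 : R ν₂ = R ν₁ - u := by rw [← hνsub, map_sub, hRvu]
      have : T z - m₂ = R z - R ν₂ := by
        rw [hT, hw, h2, hu]
        exact (by intro a b c e; abel : ∀ a b c e : EuclideanSpace ℝ (Fin d), a + (b - c) - e = a - (c - (b - e))) _ _ _ _
      rw [this, ← map_sub, R.norm_map]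
    have hν₁i : ∀ i, ν₁ i = n₁ i := by
      intro i
      rw [hν₁, hn₁]
      simp [hv, EuclideanSpace.single_apply]
      split <;> ring
    have hν₂i : ∀ i, ν₂ i = n₂ i := by
      intro i
      rw [hν₂, hn₂]
      simp [hv, EuclideanSpace.single_apply]
      split <;> ring
    set K : ℝ → ℝ → ℝ := fun p q =>
      |(Real.sqrt (2 * Real.pi * σ ^ 2))⁻¹ ^ d * Real.exp (-p / (2 * σ ^ 2))
        - (Real.sqrt (2 * Real.pi * σ ^ 2))⁻¹ ^ d * Real.exp (-q / (2 * σ ^ 2))| with hK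
    have e := EuclideanSpace.volume_preserving_symm_measurableEquiv_toLp (Fin d)
    have eemb := (MeasurableEquiv.toLp 2 (Fin d → ℝ)).symm.measurableEmbedding
    have happ : ∀ (z : EuclideanSpace ℝ (Fin d)) (i : Fin d),
        (MeasurableEquiv.toLp 2 (Fin d → ℝ)).symm z i = z i := fun z i => rfl
    have hred : ∫ x : Fin d → ℝ,
          |(∏ i, gaussPdf (μ₁ i) σ (x i)) - ∏ i, gaussPdf (μ₂ i) σ (x i)|
        = ∫ x : Fin d → ℝ,
          |(∏ i, gaussPdf (n₁ i) σ (x i)) - ∏ i, gaussPdf (n₂ i) σ (x i)| := by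
      calc ∫ x : Fin d → ℝ, |(∏ i, gaussPdf (μ₁ i) σ (x i)) - ∏ i, gaussPdf (μ₂ i) σ (x i)|
          = ∫ x : Fin d → ℝ, K (∑ i, (x i - μ₁ i) ^ 2) (∑ i, (x i - μ₂ i) ^ 2) := by
            simp only [prod_gaussPdf, hK]
        _ = ∫ z : EuclideanSpace ℝ (Fin d), K (‖z - m₁‖ ^ 2) (‖z - m₂‖ ^ 2) := by
            rw [← e.integral_comp eemb]
            congr 1; funext z
            rw [euclid_norm_sq, euclid_norm_sq]
            simp only [happ, hm₁, hm₂, WithLp.equiv_symm_apply, PiLp.toLp_apply]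
        _ = ∫ z : EuclideanSpace ℝ (Fin d), K (‖z - ν₁‖ ^ 2) (‖z - ν₂‖ ^ 2) := by
            rw [← hTmp.integral_comp hTemb]
            congr 1; funext z
            rw [hT1, hT2]
        _ = ∫ x : Fin d → ℝ, K (∑ i, (x i - n₁ i) ^ 2) (∑ i, (x i - n₂ i) ^ 2) := by
            rw [← e.integral_comp eemb]
            congr 1; funext z
            rw [euclid_norm_sq, euclid_norm_sq]
            simp only [happ, hν₁i, hν₂i]
        _ = ∫ x : Fin d → ℝ,
            |(∏ i, gaussPdf (n₁ i) σ (x i)) - ∏ i, gaussPdf (n₂ i) σ (x i)| := by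
            simp only [prod_gaussPdf, hK]
    rw [hred, factor_fubini hd hσ.ne' α n₁ n₂ hn₁ hn₂,
      oneDim hσ (Real.sqrt_nonneg _)]
    ring
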